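/- Let 𝒩 be a reflective localising subcategory of a triangulated category 𝒯 (the inclusion 𝒩 → 𝒯 has a left adjoint N: 𝒯 → 𝒩) and let 𝔏 = {A ∈ 𝒯 : N(A) = 0} be the left orthogonal complement. Then (𝔏, 𝒩) is a complementary pair, and 𝔏 is the only thick subcategory with this property: any thick 𝔏' with (𝔏', 𝒩) complementary equals 𝔏. -/

import Mathlib

open CategoryTheory Limits Pretriangulated

universe v u

section Aux

variable {C : Type u} [Category.{v} C] [Preadditive C] [HasZeroObject C] [HasShift C ℤ]
    [∀ n : ℤ, (shiftFunctor C n).Additive] [Pretriangulated C]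
    (Nset : Set C)
    (R : C ⥤ ObjectProperty.FullSubcategory (fun X => X ∈ Nset))
    (adj : R ⊣ ObjectProperty.ι (fun X => X ∈ Nset))

/-- Any morphism into `N` factors through the unit. -/
lemma aux_factor {A W : C} (hW : W ∈ Nset) (θ : A ⟶ W) :
    ∃ u : (R.obj A).obj ⟶ W, θ = adj.unit.app A ≫ u := by
  have h := adj.homEquiv_unit (X := A) (Y := ⟨W, hW⟩)
    (f := (adj.homEquiv A ⟨W, hW⟩).symm θ)
  rw [Equiv.apply_symm_apply] at h
  exact ⟨_, h⟩

/-- Precomposition with the unit is injective on morphisms into `N`. -/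
lemma aux_unit_inj {A W : C} (hW : W ∈ Nset) (u v : (R.obj A).obj ⟶ W)
    (h : adj.unit.app A ≫ u = adj.unit.app A ≫ v) : u = v := by
  have := (adj.homEquiv A ⟨W, hW⟩).injective (a₁ := ObjectProperty.homMk u) (a₂ := ObjectProperty.homMk v)
    (by rw [Adjunction.homEquiv_unit, Adjunction.homEquiv_unit]; exact h)
  exact congrArg (fun f : R.obj A ⟶ ⟨W, hW⟩ => f.hom) this

include adj in
/-- Morphisms out of objects killed by `R` into `N` vanish. -/
lemma aux_hom_zero {X Y : C} (hX : IsZero ((R.obj X).obj)) (hY : Y ∈ Nset)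
    (f : X ⟶ Y) : f = 0 := by
  obtain ⟨u, hu⟩ := aux_factor Nset R adj hY f
  rw [hu, hX.eq_of_src u 0, comp_zero]

include adj in
/-- If all morphisms from `X` into `N` vanish then `R X` is zero. -/
lemma aux_isZero {X : C} (h : ∀ W, W ∈ Nset → ∀ f : X ⟶ W, f = 0) :
    IsZero ((R.obj X).obj) := by
  rw [IsZero.iff_id_eq_zero]
  have h1 : adj.unit.app X = 0 := h _ (R.obj X).property _
  exact aux_unit_inj Nset R adj (R.obj X).property (𝟙 ((R.obj X).obj)) 0
    (by rw [h1, zero_comp, zero_comp])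

/-- Shifted vanishing from unshifted vanishing. -/
lemma aux_shift_zero_of (hshift : ∀ X ∈ Nset, ∀ n : ℤ, X⟦n⟧ ∈ Nset)
    {Z : C} (hZ : ∀ W, W ∈ Nset → ∀ ψ : Z ⟶ W, ψ = 0)
    (n : ℤ) {W : C} (hW : W ∈ Nset) (f : Z⟦n⟧ ⟶ W) : f = 0 := by
  have hWn : W⟦(-n : ℤ)⟧ ∈ Nset := hshift W hW (-n)
  have h0 : (shiftFunctorCompIsoId C n (-n) (add_neg_cancel n)).inv.app Z ≫
      (shiftFunctor C (-n)).map f = 0 := hZ _ hWn _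
  have h1 : (shiftFunctor C (-n)).map f = 0 := by
    rw [← cancel_epi ((shiftFunctorCompIsoId C n (-n) (add_neg_cancel n)).inv.app Z),
      h0, comp_zero]
  exact (shiftFunctor C (-n)).map_injective (by rw [h1, Functor.map_zero])

include adj in
/-- Shifted vanishing. -/
lemma aux_shift_zero (hshift : ∀ X ∈ Nset, ∀ n : ℤ, X⟦n⟧ ∈ Nset)
    {X Y : C} (hX : IsZero ((R.obj X).obj)) (hY : Y ∈ Nset) (n : ℤ)
    (f : X⟦n⟧ ⟶ Y) : f = 0 :=
  aux_shift_zero_of Nset hshift (fun _ hW ψ => aux_hom_zero Nset R adj hX hW ψ) n hY f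

/-- Any morphism from a shift of `A` into `N` factors through the shifted unit. -/
lemma aux_shift_factor (hshift : ∀ X ∈ Nset, ∀ n : ℤ, X⟦n⟧ ∈ Nset)
    {A W : C} (hW : W ∈ Nset) (n : ℤ) (θ : A⟦n⟧ ⟶ W) :
    ∃ u : ((R.obj A).obj)⟦n⟧ ⟶ W, θ = (adj.unit.app A)⟦n⟧' ≫ u := by
  have hWn : W⟦(-n : ℤ)⟧ ∈ Nset := hshift W hW (-n)
  set e := shiftFunctorCompIsoId C n (-n) (add_neg_cancel n) with he
  set e' := shiftFunctorCompIsoId C (-n) n (neg_add_cancel n) with he'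
  obtain ⟨u, hu⟩ := aux_factor Nset R adj hWn (e.inv.app A ≫ (shiftFunctor C (-n)).map θ)
  dsimp only [Functor.id_obj] at hu
  refine ⟨(shiftFunctor C n).map u ≫ e'.hom.app W, ?_⟩
  have nat : (shiftFunctor C n).map ((shiftFunctor C (-n)).map θ) ≫ e'.hom.app W =
      e'.hom.app (A⟦n⟧) ≫ θ := e'.hom.naturality θ
  have key : ((e.inv.app A)⟦n⟧' : A⟦n⟧ ⟶ _) = e'.inv.app (A⟦n⟧) := by
    rw [he, he']
    exact shift_shiftFunctorCompIsoId_add_neg_cancel_inv_app n A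
  rw [← Category.assoc, ← Functor.map_comp, ← hu, Functor.map_comp, Category.assoc,
    nat, ← Category.assoc, key, Iso.inv_hom_id_app]
  simp

end Aux

/-- A complementary pair of classes of objects in a triangulated category. -/
def ComplementaryPair (C : Type u) [Category.{v} C] [Preadditive C] [HasZeroObject C]
    [HasShift C ℤ] [∀ n : ℤ, (shiftFunctor C n).Additive] [Pretriangulated C]
    (L N : Set C) : Prop :=
  (∀ X ∈ L, ∀ Y ∈ N, ∀ (n : ℤ) (f : X⟦n⟧ ⟶ Y), f = 0) ∧
  (∀ A : C, ∃ (X Y : C) (f : X ⟶ A) (g : A ⟶ Y) (h : Y ⟶ X⟦(1 : ℤ)⟧),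
    Triangle.mk f g h ∈ (distTriang C) ∧ X ∈ L ∧ Y ∈ N)

/-- A thick subcategory: closed under isomorphisms, shifts, exact triangles and
retracts. -/
def IsThick (C : Type u) [Category.{v} C] [Preadditive C] [HasZeroObject C]
    [HasShift C ℤ] [∀ n : ℤ, (shiftFunctor C n).Additive] [Pretriangulated C]
    (T : Set C) : Prop :=
  (∀ {X Y : C}, (X ≅ Y) → X ∈ T → Y ∈ T) ∧
  (∀ X ∈ T, ∀ n : ℤ, X⟦n⟧ ∈ T) ∧
  (∀ T' : Triangle C, T' ∈ (distTriang C) → T'.obj₁ ∈ T → T'.obj₂ ∈ T → T'.obj₃ ∈ T) ∧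
  (∀ (X Y : C), Y ∈ T → ∀ (i : X ⟶ Y) (p : Y ⟶ X), i ≫ p = 𝟙 X → X ∈ T)

/-- A localising subcategory: a thick subcategory closed under countable direct
sums. -/
def IsLocalising (C : Type u) [Category.{v} C] [Preadditive C] [HasZeroObject C]
    [HasShift C ℤ] [∀ n : ℤ, (shiftFunctor C n).Additive] [Pretriangulated C]
    [HasCountableCoproducts C] (T : Set C) : Prop :=
  IsThick C T ∧
  (∀ (ι : Type) [Countable ι] (X : ι → C), (∀ i, X i ∈ T) → (∐ X) ∈ T)

/-- If `𝒩` is a reflective localising subcategory (the inclusion has a left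
adjoint `R`) and `𝔏 = {A : R(A) = 0}`, then `(𝔏, 𝒩)` is a complementary pair,
and `𝔏` is the only thick subcategory with this property. -/
theorem reflective_complementary_unique
    (C : Type u) [Category.{v} C] [Preadditive C] [HasZeroObject C] [HasShift C ℤ]
    [∀ n : ℤ, (shiftFunctor C n).Additive] [Pretriangulated C]
    [HasCountableCoproducts C]
    (Nset : Set C) (hN : IsLocalising C Nset)
    (R : C ⥤ ObjectProperty.FullSubcategory (fun X => X ∈ Nset))
    (adj : R ⊣ ObjectProperty.ι (fun X => X ∈ Nset)) :
    ComplementaryPair C {X : C | IsZero ((R.obj X).obj)} Nset ∧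
    (∀ L' : Set C, IsThick C L' → ComplementaryPair C L' Nset →
      L' = {X : C | IsZero ((R.obj X).obj)}) := by
  have hNshift : ∀ X ∈ Nset, ∀ n : ℤ, X⟦n⟧ ∈ Nset := hN.1.2.1
  constructor
  · constructor
    · intro X hX Y hY n f
      exact aux_shift_zero Nset R adj hNshift hX hY n f
    · intro A
      obtain ⟨Z, g₀, h₀, hT⟩ := distinguished_cocone_triangle (adj.unit.app A)
      have hT' := inv_rot_of_distTriang _ hT
      have hηg : adj.unit.app A ≫ g₀ = 0 := comp_distTriang_mor_zero₁₂ _ hT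
      have hhη : h₀ ≫ (adj.unit.app A)⟦(1 : ℤ)⟧' = 0 := comp_distTriang_mor_zero₃₁ _ hT
      -- morphisms out of Z into Nset vanish
      have hZ : ∀ W, W ∈ Nset → ∀ ψ : Z ⟶ W, ψ = 0 := by
        intro W hW ψ
        have h2 : g₀ ≫ ψ = 0 := by
          refine aux_unit_inj Nset R adj hW (g₀ ≫ ψ) 0 ?_
          rw [comp_zero, ← Category.assoc, hηg, zero_comp]
        obtain ⟨θ, hθ⟩ := Triangle.yoneda_exact₃ _ hT ψ h2
        obtain ⟨u, hu⟩ := aux_shift_factor Nset R adj hNshift hW 1 θ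
        rw [hθ, hu, ← Category.assoc]
        change (h₀ ≫ (adj.unit.app A)⟦(1 : ℤ)⟧') ≫ u = 0
        rw [hhη]
        exact zero_comp
      refine ⟨(Triangle.mk (adj.unit.app A) g₀ h₀).invRotate.obj₁, (R.obj A).obj,
        (Triangle.mk (adj.unit.app A) g₀ h₀).invRotate.mor₁,
        (Triangle.mk (adj.unit.app A) g₀ h₀).invRotate.mor₂,
        (Triangle.mk (adj.unit.app A) g₀ h₀).invRotate.mor₃, hT', ?_, (R.obj A).property⟩
      show IsZero ((R.obj (Z⟦(-1 : ℤ)⟧)).obj)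
      refine aux_isZero Nset R adj ?_
      intro W hW f
      exact aux_shift_zero_of Nset hNshift hZ (-1) hW f
  · intro L' hL' hcomp
    ext X
    simp only [Set.mem_setOf_eq]
    constructor
    · intro hX
      refine aux_isZero Nset R adj ?_
      intro W hW f
      have h0 : (shiftFunctorZero C ℤ).hom.app X ≫ f = 0 :=
        hcomp.1 X hX W hW 0 ((shiftFunctorZero C ℤ).hom.app X ≫ f)
      have : (shiftFunctorZero C ℤ).hom.app X ≫ f =
          (shiftFunctorZero C ℤ).hom.app X ≫ 0 := by rw [h0, comp_zero]
      exact (cancel_epi _).mp this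
    · intro hX
      obtain ⟨X', Y', f', g', h', hT, hX', hY'⟩ := hcomp.2 X
      have hg : g' = 0 := aux_hom_zero Nset R adj hX hY' g'
      obtain ⟨p, hp⟩ := Triangle.coyoneda_exact₂ _ hT (𝟙 X)
        (by change 𝟙 X ≫ g' = 0; rw [hg, comp_zero])
      change 𝟙 X = p ≫ f' at hp
      exact hL'.2.2.2 X X' hX' p f' hp.symm
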